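/- Let S be a set of pmfs such that q = ⋀S exists. Then q is majorized by every element of S: q ⪯ p for every p ∈ S. -/

import Mathlib

open scoped ENNReal Classical
open Filter

namespace MEC

/-- A probability mass function on `α`: (nonnegative) masses summing to `1`. -/
def IsPMF {α : Type*} (p : α → ℝ≥0∞) : Prop := ∑' x, p x = 1

/-- `p` is an aggregation of `q`, written `q ⊑ p`: there is a map `g` sending the support of
`q` into the support of `p` such that `p` is the pushforward of `q` under `g`. -/
def Agg {α β : Type*} (q : α → ℝ≥0∞) (p : β → ℝ≥0∞) : Prop :=
  ∃ g : α → β, (∀ x, q x ≠ 0 → p (g x) ≠ 0) ∧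
    ∀ y, p y = ∑' x, if g x = y then q x else 0

/-- Sum of the `k` largest masses of `p`, i.e. `max_{A, |A| ≤ k} p(A)`. -/
noncomputable def topk {α : Type*} (p : α → ℝ≥0∞) (k : ℕ) : ℝ≥0∞ :=
  ⨆ (A : Finset α) (_ : A.card ≤ k), ∑ x ∈ A, p x

/-- `q` is majorized by `p`, written `q ⪯ p`: for every `k`, the sum of the `k` largest
masses of `q` is at most the sum of the `k` largest masses of `p`. -/
def Majorized {α β : Type*} (q : α → ℝ≥0∞) (p : β → ℝ≥0∞) : Prop :=
  ∀ k : ℕ, topk q k ≤ topk p k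

/-- Product pmf `(q × r)(x,z) = q(x) · r(z)`. -/
noncomputable def prodFun {α β : Type*} (q : α → ℝ≥0∞) (r : β → ℝ≥0∞) : α × β → ℝ≥0∞ :=
  fun z => q z.1 * r z.2

/-- `Geom_{1/2}` on `ℕ+ = {1,2,3,...}`, with mass `2^{-x}` at `x`. -/
noncomputable def geomHalf : ℕ+ → ℝ≥0∞ := fun x => 2⁻¹ ^ (x : ℕ)

/-- Capped geometric distribution `CGeom_{1/2,k}` on `{1,...,k} ⊆ ℕ+`. -/
noncomputable def cgeomHalf (k : ℕ) : ℕ+ → ℝ≥0∞ := fun x =>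
  if (x : ℕ) < k then 2⁻¹ ^ (x : ℕ) else if (x : ℕ) = k then 2⁻¹ ^ (k - 1) else 0

/-- `inf_{p ∈ S} max_{A ⊆ supp(p), |A| ≤ k} p(A)`. -/
noncomputable def infTopk {α : Type*} (S : Set (α → ℝ≥0∞)) (k : ℕ) : ℝ≥0∞ :=
  ⨅ p ∈ S, topk p k

/-- The greatest lower bound `⋀S` of `S` with respect to majorization, as a pmf on
`ℕ+ = {1,2,...}`, with `(⋀S)(k) = inf_{p∈S} max_{|A|≤k} p(A) − inf_{p∈S} max_{|A|≤k−1} p(A)`. -/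
noncomputable def glb {α : Type*} (S : Set (α → ℝ≥0∞)) : ℕ+ → ℝ≥0∞ :=
  fun k => infTopk S (k : ℕ) - infTopk S ((k : ℕ) - 1)

/-- Condition for the existence of `⋀S`:
`lim_{k→∞} inf_{p∈S} max_{A⊆supp(p), |A|≤k} p(A) = 1`. -/
def GlbExists {α : Type*} (S : Set (α → ℝ≥0∞)) : Prop :=
  Tendsto (fun k => infTopk S k) atTop (nhds 1)

/-- Base-2 logarithm on `ℝ≥0∞` (intended for arguments in `[1,∞]`). -/
noncomputable def log2 (x : ℝ≥0∞) : ℝ≥0∞ :=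
  if x = ∞ then ∞ else ENNReal.ofReal (Real.logb 2 x.toReal)

/-- Shannon entropy (base 2): `H(p) = Σ_x p(x) log₂ (1/p(x))`. -/
noncomputable def shannon {α : Type*} (p : α → ℝ≥0∞) : ℝ≥0∞ :=
  ∑' x, p x * log2 (p x)⁻¹

/-- Rényi entropy of order `a ∈ [0,∞]` (base 2):
`H_a(p) = (1/(1−a)) log₂ Σ_{x ∈ supp(p)} p(x)^a` for `a ∉ {1,∞}` (for `a > 1` this is
written in the equivalent form `(1/(a−1)) log₂ (Σ_{x ∈ supp(p)} p(x)^a)⁻¹` so that it is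
nonnegative), Shannon entropy for `a = 1`, and `−log₂ max_x p(x)` for `a = ∞`. -/
noncomputable def renyi {α : Type*} (p : α → ℝ≥0∞) (a : ℝ≥0∞) : ℝ≥0∞ :=
  if a = 1 then shannon p
  else if a = ∞ then log2 (⨆ x, p x)⁻¹
  else if a < 1 then log2 (∑' x, if p x = 0 then 0 else p x ^ a.toReal) * (1 - a)⁻¹
  else log2 (∑' x, if p x = 0 then 0 else p x ^ a.toReal)⁻¹ * (a - 1)⁻¹

/-- `q ∈ Γ̃(S)`: `q` (a pmf over `ℕ`, without loss of generality) is an underlying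
distribution of a coupling of `S`, i.e. `q ⊑ p` for every `p ∈ S`. -/
def UnderlyingCoupling {α : Type*} (S : Set (α → ℝ≥0∞)) (q : ℕ → ℝ≥0∞) : Prop :=
  IsPMF q ∧ ∀ p ∈ S, Agg q p

/-- `H*_a(S) = inf_{q ∈ Γ̃(S)} H_a(q)`, the minimum Rényi entropy of couplings of `S`. -/
noncomputable def minRenyi {α : Type*} (S : Set (α → ℝ≥0∞)) (a : ℝ≥0∞) : ℝ≥0∞ :=
  ⨅ (q : ℕ → ℝ≥0∞) (_ : UnderlyingCoupling S q), renyi q a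


lemma sum_le_topk {α : Type*} (p : α → ℝ≥0∞) {A : Finset α} {k : ℕ} (hA : A.card ≤ k) :
    ∑ x ∈ A, p x ≤ topk p k := le_iSup₂_of_le A hA le_rfl

lemma topk_le {α : Type*} {p : α → ℝ≥0∞} {k : ℕ} {c : ℝ≥0∞}
    (h : ∀ A : Finset α, A.card ≤ k → ∑ x ∈ A, p x ≤ c) : topk p k ≤ c := iSup₂_le h

lemma topk_mono {α : Type*} (p : α → ℝ≥0∞) : Monotone (topk p) := fun _ _ h =>
  topk_le fun _ hA => sum_le_topk p (hA.trans h)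

lemma topk_zero {α : Type*} (p : α → ℝ≥0∞) : topk p 0 = 0 := by
  refine le_antisymm (topk_le fun A hA => ?_) zero_le
  simp [Finset.card_eq_zero.mp (Nat.le_zero.mp hA)]

lemma topk_concave {α : Type*} (p : α → ℝ≥0∞) (n : ℕ) :
    topk p (n + 2) + topk p n ≤ topk p (n + 1) + topk p (n + 1) := by
  refine ENNReal.biSup_add_biSup_le' (p := fun A : Finset α => A.card ≤ n + 2)
    (q := fun A : Finset α => A.card ≤ n) ⟨∅, by simp⟩ ⟨∅, by simp⟩ ?_
  intro A hA B hB
  by_cases hsub : A ⊆ B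
  · have h1 : ∑ x ∈ A, p x ≤ ∑ x ∈ B, p x := Finset.sum_le_sum_of_subset hsub
    have h2 : ∑ x ∈ B, p x ≤ topk p (n + 1) := sum_le_topk p (hB.trans (by omega))
    exact add_le_add (h1.trans h2) h2
  · obtain ⟨x, hxA, hxB⟩ := Finset.not_subset.mp hsub
    have h1 : ∑ y ∈ A.erase x, p y + p x = ∑ y ∈ A, p y := Finset.sum_erase_add _ _ hxA
    have h2 : ∑ y ∈ insert x B, p y = p x + ∑ y ∈ B, p y := Finset.sum_insert hxB
    have hc1 : (A.erase x).card ≤ n + 1 := by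
      rw [Finset.card_erase_of_mem hxA]; omega
    have hc2 : (insert x B).card ≤ n + 1 := by
      have := Finset.card_insert_le x B; omega
    calc ∑ y ∈ A, p y + ∑ y ∈ B, p y
        = ∑ y ∈ A.erase x, p y + ∑ y ∈ insert x B, p y := by
          rw [h2, ← h1]; ring
      _ ≤ topk p (n + 1) + topk p (n + 1) :=
          add_le_add (sum_le_topk p hc1) (sum_le_topk p hc2)

lemma infTopk_le_topk {α : Type*} {S : Set (α → ℝ≥0∞)} {p : α → ℝ≥0∞} (hp : p ∈ S) (k : ℕ) :
    infTopk S k ≤ topk p k := iInf₂_le p hp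

lemma infTopk_mono {α : Type*} (S : Set (α → ℝ≥0∞)) : Monotone (infTopk S) := fun _ _ h =>
  iInf_mono fun q => iInf_mono fun _ => topk_mono q h

lemma infTopk_concave {α : Type*} (S : Set (α → ℝ≥0∞)) (n : ℕ) :
    infTopk S (n + 2) + infTopk S n ≤ infTopk S (n + 1) + infTopk S (n + 1) := by
  have hrw : ∀ m : ℕ, infTopk S m = ⨅ p : S, topk (p : α → ℝ≥0∞) m := fun m =>
    (iInf_subtype'' S fun q => topk q m).symm
  rw [hrw (n + 1)]
  rw [ENNReal.iInf_add_iInf (fun i j => by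
    rcases le_total (topk (i : α → ℝ≥0∞) (n + 1)) (topk (j : α → ℝ≥0∞) (n + 1)) with h | h
    · exact ⟨i, by gcongr⟩
    · exact ⟨j, by gcongr⟩)]
  refine le_iInf fun p => ?_
  calc infTopk S (n + 2) + infTopk S n
      ≤ topk (p : α → ℝ≥0∞) (n + 2) + topk (p : α → ℝ≥0∞) n :=
        add_le_add (infTopk_le_topk p.2 _) (infTopk_le_topk p.2 _)
    _ ≤ _ := topk_concave _ n

lemma sum_antitone_le {d : ℕ → ℝ≥0∞} (hd : Antitone d) (B : Finset ℕ) :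
    ∑ x ∈ B, d x ≤ ∑ i ∈ Finset.range B.card, d i := by
  suffices H : ∀ k (B : Finset ℕ), B.card = k → ∑ x ∈ B, d x ≤ ∑ i ∈ Finset.range k, d i from
    H _ B rfl
  intro k
  induction k with
  | zero => intro B hB; simp [Finset.card_eq_zero.mp hB]
  | succ k ih =>
    intro B hB
    have hne : B.Nonempty := Finset.card_pos.mp (by omega)
    have hMB : B.max' hne ∈ B := B.max'_mem hne
    have hsub : B ⊆ Finset.range (B.max' hne + 1) := fun x hx =>
      Finset.mem_range.mpr (Nat.lt_succ_of_le (B.le_max' x hx))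
    have hcard : k + 1 ≤ B.max' hne + 1 := by
      have := Finset.card_le_card hsub
      rw [Finset.card_range] at this; omega
    have hsum : ∑ x ∈ B.erase (B.max' hne), d x + d (B.max' hne) = ∑ x ∈ B, d x :=
      Finset.sum_erase_add _ _ hMB
    rw [← hsum, Finset.sum_range_succ]
    have hcerase : (B.erase (B.max' hne)).card = k := by
      rw [Finset.card_erase_of_mem hMB, hB]; omega
    exact add_le_add (ih _ hcerase) (hd (by omega))

/-- Proposition 3(2): `q = ⋀S` is majorized by every element of `S`. -/
theorem glb_majorized_by_mem {α : Type*} [Countable α]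
    (S : Set (α → ℝ≥0∞)) (hS : ∀ p ∈ S, IsPMF p) (hex : GlbExists S) :
    ∀ p ∈ S, Majorized (glb S) p := by
  intro p hp k
  have hf0 : infTopk S 0 = 0 :=
    le_antisymm ((infTopk_le_topk hp 0).trans (topk_zero p).le) zero_le
  set f : ℕ → ℝ≥0∞ := fun n => infTopk S n with hfdef
  set d : ℕ → ℝ≥0∞ := fun n => f (n + 1) - f n with hddef
  have hfmono : Monotone f := infTopk_mono S
  have hanti : Antitone d := by
    refine antitone_nat_of_succ_le fun n => ?_
    rw [hddef]
    dsimp only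
    rw [tsub_le_iff_right]
    have hfin : f n ≠ ∞ := by
      refine ne_top_of_le_ne_top ENNReal.one_ne_top ?_
      exact (infTopk_le_topk hp n).trans (topk_le fun A _ => (ENNReal.sum_le_tsum A).trans_eq (hS p hp))
    rw [← ENNReal.add_le_add_iff_right hfin]
    have hX : f (n + 1) - f n + f (n + 1) + f n = f (n + 1) + f (n + 1) := by
      rw [add_right_comm, tsub_add_cancel_of_le (hfmono (Nat.le_succ n))]
    rw [hX]
    exact infTopk_concave S n
  have htel : ∀ m, ∑ i ∈ Finset.range m, d i = f m := by
    intro m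
    induction m with
    | zero => simp [hfdef, hf0]
    | succ m ih =>
      rw [Finset.sum_range_succ, ih, hddef]
      exact add_tsub_cancel_of_le (hfmono (Nat.le_succ m))
  refine topk_le fun A hA => ?_
  have hglb : ∀ x : ℕ+, glb S x = d ((x : ℕ) - 1) := by
    intro x
    have hx : (x : ℕ) - 1 + 1 = (x : ℕ) := Nat.succ_pred_eq_of_pos x.2
    simp only [glb, hddef, hfdef, hx]
  have hinj : ∀ x ∈ A, ∀ y ∈ A, ((x : ℕ) - 1 = (y : ℕ) - 1) → x = y := by
    intro x _ y _ h
    have hx : ((x : ℕ) - 1) + 1 = (x : ℕ) := Nat.succ_pred_eq_of_pos x.2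
    have hy : ((y : ℕ) - 1) + 1 = (y : ℕ) := Nat.succ_pred_eq_of_pos y.2
    exact PNat.coe_injective (by rw [← hx, h, hy])
  calc ∑ x ∈ A, glb S x = ∑ n ∈ A.image (fun x : ℕ+ => (x : ℕ) - 1), d n := by
        rw [Finset.sum_image hinj]
        exact Finset.sum_congr rfl fun x _ => hglb x
    _ ≤ ∑ i ∈ Finset.range (A.image (fun x : ℕ+ => (x : ℕ) - 1)).card, d i :=
        sum_antitone_le hanti _
    _ ≤ ∑ i ∈ Finset.range k, d i := by
        refine Finset.sum_le_sum_of_subset (Finset.range_subset_range.mpr ?_)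
        exact (Finset.card_image_le).trans hA
    _ = f k := htel k
    _ ≤ topk p k := infTopk_le_topk hp k


end MEC
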